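/- arXiv:2303.00407 — 3 statements merged into one kernel-verified Lean document; each statement's English description precedes it below -/
import Mathlib

section
/- Let R be an integral domain with fraction field K, I ⊆ R an ideal, and x ∈ R. Then x is integral over the ideal I if and only if for every valuation subring V of K containing R one has x ∈ I·V (the extension of I to V). -/
/-- `x` is integral over the ideal `I`: it satisfies a monic equation
`x^n + a_1 x^{n-1} + ... + a_n = 0` with `a_i ∈ I^i`. -/
def IsIntegralOverIdeal {A : Type*} [CommRing A] (I : Ideal A) (s : A) : Prop :=
  ∃ n : ℕ, 0 < n ∧ ∃ a : ℕ → A, (∀ i ∈ Finset.Icc 1 n, a i ∈ I ^ i) ∧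
    s ^ n + ∑ i ∈ Finset.Icc 1 n, a i * s ^ (n - i) = 0

lemma eq_zero_of_mem_maximalIdeal_mul_span {V : Type*} [CommRing V] [IsLocalRing V] {z : V}
    (hz : z ∈ IsLocalRing.maximalIdeal V * Ideal.span {z}) : z = 0 := by
  rw [Ideal.mem_mul_span_singleton] at hz
  obtain ⟨m, hm, hmz⟩ := hz
  have hu : IsUnit (1 - m) := IsLocalRing.isUnit_one_sub_self_of_mem_nonunits m hm
  have h0 : (1 - m) * z = 0 := by ring_nf; linear_combination -hmz
  obtain ⟨u, hu⟩ := hu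
  calc z = (u⁻¹ : Vˣ) * ((1 - m) * z) := by rw [← mul_assoc, ← hu]; simp
  _ = 0 := by rw [h0, mul_zero]

lemma Submodule.mem_finset_sum'' {ι R M : Type*} [Semiring R] [AddCommMonoid M] [Module R M]
    {s : Finset ι} {p : ι → Submodule R M} {x : M} (hx : x ∈ ∑ i ∈ s, p i) :
    ∃ f : ι → M, (∀ i ∈ s, f i ∈ p i) ∧ ∑ i ∈ s, f i = x := by
  classical
  induction s using Finset.induction_on generalizing x with
  | empty => refine ⟨0, by simp, by simpa using (by simpa using hx : x = 0).symm⟩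
  | @insert a s hni ih =>
    rw [Finset.sum_insert hni] at hx
    obtain ⟨y, hy, z, hz, rfl⟩ := Submodule.mem_sup.mp hx
    obtain ⟨f, hf, hfs⟩ := ih hz
    refine ⟨Function.update f a y, ?_, ?_⟩
    · intro i hi
      rcases Finset.mem_insert.mp hi with rfl | hi
      · simpa using hy
      · rw [Function.update_of_ne (fun h : i = a => hni (h ▸ hi))]; exact hf i hi
    · rw [Finset.sum_insert hni, Function.update_self]
      congr 1
      rw [← hfs]
      exact Finset.sum_congr rfl (fun i hi => Function.update_of_ne (fun h : i = a => hni (h ▸ hi)) _ _)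

lemma isIntegralOverIdeal_of_pow_mem {R : Type*} [CommRing R] (I : Ideal R) (x : R) (N : ℕ)
    (hN : 0 < N)
    (h : x ^ N ∈ ∑ i ∈ Finset.Icc 1 N, I ^ i * Ideal.span {x ^ (N - i)}) :
    IsIntegralOverIdeal I x := by
  obtain ⟨f, hf, hsum⟩ := Submodule.mem_finset_sum'' h
  have hc : ∀ i ∈ Finset.Icc 1 N, ∃ c ∈ I ^ i, c * x ^ (N - i) = f i := by
    intro i hi
    exact Ideal.mem_mul_span_singleton.mp (hf i hi)
  choose! c hcI hcx using hc
  refine ⟨N, hN, fun i => -c i, fun i hi => neg_mem (hcI i hi), ?_⟩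
  have : ∑ i ∈ Finset.Icc 1 N, -c i * x ^ (N - i) = -(x ^ N) := by
    rw [← hsum, ← Finset.sum_neg_distrib]
    exact Finset.sum_congr rfl fun i hi => by rw [neg_mul, hcx i hi]
  rw [this, add_neg_cancel]

theorem integral_over_ideal_iff_mem_extension_to_valuation_subrings
    {R K : Type*} [CommRing R] [IsDomain R] [Field K] [Algebra R K]
    [IsFractionRing R K] (I : Ideal R) (x : R) :
    IsIntegralOverIdeal I x ↔
      ∀ (V : ValuationSubring K) (h : ∀ r : R, algebraMap R K r ∈ V.toSubring),
        ((algebraMap R K).codRestrict V.toSubring h) x ∈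
          Ideal.map ((algebraMap R K).codRestrict V.toSubring h) I := by
  constructor
  · intro hx V h
    set f := (algebraMap R K).codRestrict V.toSubring h with hf
    set J := Ideal.map f I with hJ
    by_contra hfx
    obtain ⟨n, hn, a, haI, heq⟩ := hx
    -- J is contained in m * (f x)
    have hJle : J ≤ IsLocalRing.maximalIdeal V * Ideal.span {f x} := by
      rw [hJ, Ideal.map_le_iff_le_comap]
      intro b hb
      simp only [Ideal.mem_comap]
      rcases ValuationRing.dvd_total (R := V) (f x) (f b) with ⟨m, hm⟩ | ⟨c, hc⟩
      · have hmnu : m ∈ IsLocalRing.maximalIdeal V := by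
          rw [IsLocalRing.mem_maximalIdeal, mem_nonunits_iff]
          intro hu
          obtain ⟨u, rfl⟩ := hu
          exact hfx (by
            have : f x = f b * (u⁻¹ : Vˣ) := by
              rw [hm]; simp [mul_assoc]
            rw [this]
            exact Ideal.mul_mem_right _ _ (Ideal.mem_map_of_mem f hb))
        show f b ∈ _
        rw [hm, mul_comm (f x) m]
        exact Ideal.mul_mem_mul hmnu (Ideal.mem_span_singleton_self _)
      · exact absurd (hc ▸ Ideal.mul_mem_right c _ (Ideal.mem_map_of_mem f hb)) hfx
    -- each term lies in m * span {f x ^ n}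
    have hterm : ∀ i ∈ Finset.Icc 1 n,
        f (a i) * (f x) ^ (n - i) ∈ IsLocalRing.maximalIdeal V * Ideal.span {(f x) ^ n} := by
      intro i hi
      obtain ⟨hi1, hin⟩ := Finset.mem_Icc.mp hi
      have h1 : f (a i) ∈ J ^ i := by
        rw [hJ, ← Ideal.map_pow]
        exact Ideal.mem_map_of_mem f (haI i hi)
      have h2 : J ^ i ≤ IsLocalRing.maximalIdeal V * Ideal.span {(f x) ^ i} := by
        calc J ^ i ≤ (IsLocalRing.maximalIdeal V * Ideal.span {f x}) ^ i :=
              Ideal.pow_right_mono hJle i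
          _ = (IsLocalRing.maximalIdeal V) ^ i * Ideal.span {f x} ^ i := mul_pow _ _ i
          _ ≤ IsLocalRing.maximalIdeal V * Ideal.span {(f x) ^ i} := by
              rw [Ideal.span_singleton_pow]
              exact Ideal.mul_mono (Ideal.pow_le_self (by omega)) le_rfl
      have h3 := Ideal.mul_mem_mul (h2 h1) (Ideal.mem_span_singleton_self ((f x) ^ (n - i)))
      rw [mul_assoc, Ideal.span_singleton_mul_span_singleton, ← pow_add] at h3
      rwa [Nat.add_sub_cancel' hin] at h3
    have hsum : (f x) ^ n ∈ IsLocalRing.maximalIdeal V * Ideal.span {(f x) ^ n} := by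
      have happ : (f x) ^ n + ∑ i ∈ Finset.Icc 1 n, f (a i) * (f x) ^ (n - i) = 0 := by
        have := congrArg f heq
        simpa [map_add, map_pow, map_sum, map_mul] using this
      have hmem : -∑ i ∈ Finset.Icc 1 n, f (a i) * (f x) ^ (n - i)
          ∈ IsLocalRing.maximalIdeal V * Ideal.span {(f x) ^ n} :=
        neg_mem (Submodule.sum_mem _ hterm)
      rwa [← eq_neg_of_add_eq_zero_left happ] at hmem
    have hzero : (f x) ^ n = 0 := eq_zero_of_mem_maximalIdeal_mul_span (V := V) hsum
    have : f x = 0 := pow_eq_zero_iff hn.ne' |>.mp hzero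
    exact hfx (this ▸ zero_mem J)
  · intro H
    by_contra hni
    have hx0 : x ≠ 0 := by
      rintro rfl
      exact hni ⟨1, one_pos, fun _ => 0, by simp, by simp⟩
    have hξ : algebraMap R K x ≠ 0 :=
      fun e => hx0 ((map_eq_zero_iff _ (IsFractionRing.injective R K)).mp e)
    set ξ : K := algebraMap R K x with hξdef
    set U : Set K := {y | ∃ i a, a ∈ I ^ i ∧ y * ξ ^ i = algebraMap R K a} with hUdef
    have hU1 : (1 : K) ∈ U := ⟨0, 1, by simp, by simp⟩
    have hUmul : ∀ y ∈ U, ∀ z ∈ U, y * z ∈ U := by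
      rintro y ⟨i, a, ha, hya⟩ z ⟨j, b, hb, hzb⟩
      refine ⟨i + j, a * b, ?_, ?_⟩
      · rw [pow_add]; exact Ideal.mul_mem_mul ha hb
      · rw [pow_add, map_mul, ← hya, ← hzb]; ring
    set W : Submodule R K := Submodule.span R U with hWdef
    have hWmul : ∀ y z : K, y ∈ W → z ∈ W → y * z ∈ W := by
      intro y z hy hz
      have h1 := Submodule.mul_mem_mul hy hz
      rw [hWdef, Submodule.span_mul_span] at h1
      exact Submodule.span_le.mpr (Set.mul_subset_iff.mpr
        (fun a ha b hb => Submodule.subset_span (hUmul a ha b hb))) h1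
    set Walg : Subalgebra R K := W.toSubalgebra (Submodule.subset_span hU1) hWmul with hWalg
    set S : Subring K := Walg.toSubring with hSdef
    have hRS : ∀ r : R, algebraMap R K r ∈ S := fun r => Walg.algebraMap_mem r
    set G : Set S := {s | ∃ a ∈ I, (s : K) * ξ = algebraMap R K a} with hGdef
    set 𝔞 : Ideal S := Ideal.span G with h𝔞def
    have hprop : 𝔞 ≠ ⊤ := by
      intro htop
      have h1 : (1 : S) ∈ 𝔞 := (Ideal.eq_top_iff_one _).mp htop
      set U₁ : Set K := {y | ∃ i a, 0 < i ∧ a ∈ I ^ i ∧ y * ξ ^ i = algebraMap R K a} with hU₁def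
      have hUU₁ : ∀ y ∈ U, ∀ z ∈ U₁, y * z ∈ U₁ := by
        rintro y ⟨i, a, ha, hya⟩ z ⟨j, b, hj, hb, hzb⟩
        refine ⟨i + j, a * b, by omega, ?_, ?_⟩
        · rw [pow_add]; exact Ideal.mul_mem_mul ha hb
        · rw [pow_add, map_mul, ← hya, ← hzb]; ring
      have hclaim : ∀ s : S, s ∈ 𝔞 → (s : K) ∈ Submodule.span R U₁ := by
        intro s hs
        induction hs using Submodule.span_induction with
        | mem t ht =>
          obtain ⟨a, ha, hta⟩ := ht
          exact Submodule.subset_span ⟨1, a, one_pos, by rwa [pow_one], by rwa [pow_one]⟩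
        | zero => exact (Submodule.span R U₁).zero_mem
        | add t u _ _ ht hu => push_cast; exact add_mem ht hu
        | smul a t _ ht =>
          have h2 : (a : K) * (t : K) ∈ W * Submodule.span R U₁ :=
            Submodule.mul_mem_mul a.2 ht
          rw [hWdef, Submodule.span_mul_span] at h2
          exact Submodule.span_le.mpr (Set.mul_subset_iff.mpr
            (fun y hy z hz => Submodule.subset_span (hUU₁ y hy z hz))) h2
      have h1' : (1 : K) ∈ Submodule.span R U₁ := by simpa using hclaim 1 h1
      obtain ⟨c, hcsupp, hcsum⟩ := Submodule.mem_span_set.mp h1'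
      have hch : ∀ y ∈ c.support, ∃ i b, 0 < i ∧ b ∈ I ^ i ∧ y * ξ ^ i = algebraMap R K b :=
        fun y hy => hcsupp hy
      choose! iy ay hipos haI' heqy using hch
      have hTne : c.support.Nonempty := by
        rcases Finset.eq_empty_or_nonempty c.support with hT | hT
        · exfalso
          apply one_ne_zero (α := K)
          rw [← hcsum, Finsupp.sum, hT, Finset.sum_empty]
        · exact hT
      set N := c.support.sup iy with hNdef
      have hiN : ∀ y ∈ c.support, iy y ≤ N := fun y hy => Finset.le_sup hy
      have hNpos : 0 < N := by
        obtain ⟨y0, hy0⟩ := hTne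
        exact lt_of_lt_of_le (hipos y0 hy0) (hiN y0 hy0)
      have hkey : ξ ^ N = algebraMap R K (∑ y ∈ c.support, c y * ay y * x ^ (N - iy y)) := by
        rw [map_sum]
        have hone : ∑ y ∈ c.support, c y • y = 1 := hcsum
        calc ξ ^ N = (∑ y ∈ c.support, c y • y) * ξ ^ N := by rw [hone, one_mul]
          _ = ∑ y ∈ c.support, (c y • y) * ξ ^ N := Finset.sum_mul _ _ _
          _ = ∑ y ∈ c.support, algebraMap R K (c y * ay y * x ^ (N - iy y)) := by
              refine Finset.sum_congr rfl fun y hy => ?_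
              have h3 : y * ξ ^ N = algebraMap R K (ay y) * ξ ^ (N - iy y) := by
                calc y * ξ ^ N = (y * ξ ^ iy y) * ξ ^ (N - iy y) := by
                      rw [mul_assoc, ← pow_add, Nat.add_sub_cancel' (hiN y hy)]
                  _ = algebraMap R K (ay y) * ξ ^ (N - iy y) := by rw [heqy y hy]
              rw [Algebra.smul_def, mul_assoc, h3, map_mul, map_mul, map_pow, ← hξdef]
              ring
      have hxN : x ^ N = ∑ y ∈ c.support, c y * ay y * x ^ (N - iy y) := by
        apply IsFractionRing.injective R K
        rw [map_pow, ← hξdef]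
        exact hkey
      have hmem : x ^ N ∈ ∑ i ∈ Finset.Icc 1 N, I ^ i * Ideal.span {x ^ (N - i)} := by
        rw [hxN]
        refine Submodule.sum_mem _ fun y hy => ?_
        have h4 : c y * ay y * x ^ (N - iy y) ∈ I ^ iy y * Ideal.span {x ^ (N - iy y)} :=
          Ideal.mul_mem_mul (Ideal.mul_mem_left _ _ (haI' y hy)) (Ideal.mem_span_singleton_self _)
        have h5 : I ^ iy y * Ideal.span {x ^ (N - iy y)} ≤
            ∑ i ∈ Finset.Icc 1 N, I ^ i * Ideal.span {x ^ (N - i)} :=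
          Finset.single_le_sum (f := fun i => I ^ i * Ideal.span {x ^ (N - i)})
            (fun i _ => zero_le) (Finset.mem_Icc.mpr ⟨hipos y hy, hiN y hy⟩)
        exact h5 h4
      exact hni (isIntegralOverIdeal_of_pow_mem I x N hNpos hmem)
    obtain ⟨M, hMmax, h𝔞M⟩ := Ideal.exists_le_maximal 𝔞 hprop
    haveI := hMmax.isPrime
    obtain ⟨V, hLV⟩ := (LocalSubring.ofPrime S M).exists_le_valuationSubring
    obtain ⟨hVle, hVloc⟩ := hLV
    have hSV : S ≤ V.toSubring := le_trans (LocalSubring.le_ofPrime S M) hVle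
    have hmem := H V (fun r => hSV (hRS r))
    set f := (algebraMap R K).codRestrict V.toSubring (fun r => hSV (hRS r)) with hfdef
    have hle : Ideal.map f I ≤ IsLocalRing.maximalIdeal V * Ideal.span {f x} := by
      rw [Ideal.map_le_iff_le_comap]
      intro a ha
      simp only [Ideal.mem_comap]
      have hmemS : algebraMap R K a / ξ ∈ S := by
        apply Submodule.subset_span
        exact ⟨1, a, by rwa [pow_one], by rw [pow_one]; field_simp⟩
      set s₀ : S := ⟨algebraMap R K a / ξ, hmemS⟩ with hs₀
      have hs₀M : s₀ ∈ M := h𝔞M (Ideal.subset_span ⟨a, ha, by exact div_mul_cancel₀ _ hξ⟩)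
      have hnu1 : ¬ IsUnit (Subring.inclusion (LocalSubring.le_ofPrime S M) s₀) := by
        intro hu
        have h6 := (IsLocalization.AtPrime.isUnit_to_map_iff
          ((LocalSubring.ofPrime S M).toSubring) M s₀).mp hu
        exact h6 hs₀M
      have hnu : ¬ IsUnit (⟨algebraMap R K a / ξ, hSV hmemS⟩ : V) := by
        intro hu
        apply hnu1
        apply hVloc.map_nonunit
        exact hu
      have hfa : f a = f x * (⟨algebraMap R K a / ξ, hSV hmemS⟩ : V) := by
        apply Subtype.ext
        show algebraMap R K a = ξ * (algebraMap R K a / ξ)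
        field_simp
      rw [hfa, mul_comm (f x)]
      exact Ideal.mul_mem_mul ((IsLocalRing.mem_maximalIdeal (R := V) _).mpr hnu)
        (Ideal.mem_span_singleton_self _)
    have hz : f x = 0 := eq_zero_of_mem_maximalIdeal_mul_span (V := V) (hle hmem)
    exact hξ (congrArg Subtype.val hz)
end

section
/- Let k be a field of characteristic zero and let I be an ideal of k[x_1, ..., x_n] that is stable under the Euler-type operators x_i·∂/∂x_i for all i, i.e. x_i·(∂f/∂x_i) ∈ I for every f ∈ I and every i. Then I is a monomial ideal: I is generated by the monomials it contains; equivalently, whenever f ∈ I, every monomial x^a appearing in f with nonzero coefficient lies in I. -/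
open MvPolynomial

lemma coeff_euler {k : Type*} [CommRing k] {n : ℕ} (i : Fin n)
    (f : MvPolynomial (Fin n) k) (a : Fin n →₀ ℕ) :
    coeff a (X i * pderiv i f) = (a i : k) * coeff a f := by
  induction f using MvPolynomial.induction_on' with
  | add p q hp hq => simp [mul_add, hp, hq, mul_add]
  | monomial b c =>
    rw [pderiv_monomial, X, monomial_mul, one_mul, coeff_monomial, coeff_monomial]
    rcases Nat.eq_zero_or_pos (b i) with h0 | hpos
    · split_ifs with h1 h2 h3 <;> subst_vars <;>
        first
          | (simp [h0]; done)
          | (exfalso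
             have hc := DFunLike.congr_fun h2 i
             simp [h0, Finsupp.single_apply, Finsupp.add_apply, Finsupp.tsub_apply] at hc)
    · have hb : Finsupp.single i 1 + (b - Finsupp.single i 1) = b := by
        ext j
        rcases eq_or_ne j i with rfl | hj
        · simp [Finsupp.single_apply]; omega
        · simp [Finsupp.single_apply, hj.symm, Finsupp.tsub_apply]
      rw [hb]
      split_ifs with h
      · subst h; ring
      · ring

lemma key {k : Type*} [Field k] [CharZero k] {n : ℕ}
    (I : Ideal (MvPolynomial (Fin n) k))
    (hst : ∀ f ∈ I, ∀ i : Fin n, X i * pderiv i f ∈ I) :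
    ∀ s : ℕ, ∀ f ∈ I, f.support.card ≤ s → ∀ a ∈ f.support, (monomial a (1 : k)) ∈ I := by
  intro s
  induction s with
  | zero =>
    intro f _ hcard a ha
    rw [Nat.le_zero, Finset.card_eq_zero] at hcard
    simp [hcard] at ha
  | succ s ih =>
    intro f hf hcard a ha
    by_cases hsup : f.support = {a}
    · have hne : coeff a f ≠ 0 := mem_support_iff.mp ha
      have hfa : f = monomial a (coeff a f) := by
        conv_lhs => rw [f.as_sum, hsup]
        simp
      have : (monomial a (1 : k)) = C (coeff a f)⁻¹ * f := by
        calc (monomial a (1 : k)) = C (coeff a f)⁻¹ * monomial a (coeff a f) := by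
              rw [C_mul_monomial, inv_mul_cancel₀ hne]
        _ = C (coeff a f)⁻¹ * f := by rw [← hfa]
      rw [this]
      exact I.mul_mem_left _ hf
    · have : ∃ b ∈ f.support, b ≠ a := by
        by_contra hc
        push_neg at hc
        exact hsup (Finset.eq_singleton_iff_unique_mem.mpr ⟨ha, hc⟩)
      obtain ⟨b, hb, hba⟩ := this
      obtain ⟨i, hi⟩ := Finsupp.ne_iff.mp hba
      set g : MvPolynomial (Fin n) k := X i * pderiv i f - C ((b i : k)) * f with hg
      have hgI : g ∈ I := I.sub_mem (hst f hf i) (I.mul_mem_left _ hf)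
      have hcg : ∀ c : Fin n →₀ ℕ, coeff c g = ((c i : k) - (b i : k)) * coeff c f := by
        intro c
        rw [hg, coeff_sub, coeff_euler, coeff_C_mul]
        ring
      have hsub : g.support ⊆ f.support.erase b := by
        intro c hc
        rw [mem_support_iff, hcg] at hc
        rw [Finset.mem_erase, mem_support_iff]
        refine ⟨?_, right_ne_zero_of_mul hc⟩
        rintro rfl
        simp at hc
      have hgcard : g.support.card ≤ s := by
        calc g.support.card ≤ (f.support.erase b).card := Finset.card_le_card hsub
        _ = f.support.card - 1 := Finset.card_erase_of_mem hb
        _ ≤ s := by omega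
      have hag : a ∈ g.support := by
        rw [mem_support_iff, hcg]
        exact mul_ne_zero (sub_ne_zero_of_ne (by exact_mod_cast hi.symm)) (mem_support_iff.mp ha)
      exact ih g hgI hgcard a hag

theorem ideal_stable_under_euler_ops_is_monomial
    {k : Type*} [Field k] [CharZero k] {n : ℕ}
    (I : Ideal (MvPolynomial (Fin n) k))
    (hst : ∀ f ∈ I, ∀ i : Fin n, X i * pderiv i f ∈ I) :
    (∀ f ∈ I, ∀ a : Fin n →₀ ℕ, coeff a f ≠ 0 → (monomial a (1 : k)) ∈ I) ∧
    I = Ideal.span {m : MvPolynomial (Fin n) k |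
      (∃ a : Fin n →₀ ℕ, m = monomial a 1) ∧ m ∈ I} := by
  have h1 : ∀ f ∈ I, ∀ a : Fin n →₀ ℕ, coeff a f ≠ 0 → (monomial a (1 : k)) ∈ I := by
    intro f hf a ha
    exact key I hst f.support.card f hf le_rfl a (mem_support_iff.mpr ha)
  refine ⟨h1, le_antisymm ?_ ?_⟩
  · intro f hf
    rw [f.as_sum]
    refine Ideal.sum_mem _ fun a ha => ?_
    have : (monomial a (coeff a f)) = C (coeff a f) * monomial a 1 := by
      rw [C_mul_monomial, mul_one]
    rw [this]
    exact Ideal.mul_mem_left _ _ (Ideal.subset_span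
      ⟨⟨a, rfl⟩, h1 f hf a (mem_support_iff.mp ha)⟩)
  · rw [Ideal.span_le]
    rintro m ⟨-, hm⟩
    exact hm
end

section
/- Let k be a field and n ≥ 1 a natural number. The quotient ring k[x,y,z]/(xz − y^n) is isomorphic, as a k-algebra, to the k-subalgebra of the localization k[x,y][1/x] generated by x, y, and y^n/x. Concretely, the k-algebra map k[x,y,z] → k[x,y][1/x] sending x ↦ x, y ↦ y, z ↦ y^n/x has kernel exactly the ideal (xz − y^n). -/
open MvPolynomial

private lemma an_reduce {k : Type*} [Field k] (n : ℕ) (p : MvPolynomial (Fin 3) k) :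
    ∃ (d : ℕ) (g : MvPolynomial (Fin 2) k),
      (X 0 * X 2 - X 1 ^ n : MvPolynomial (Fin 3) k) ∣
        X 0 ^ d * p - rename Fin.castSucc g := by
  induction p using MvPolynomial.induction_on with
  | C a =>
    exact ⟨0, C a, by simp⟩
  | add p q hp hq =>
    obtain ⟨d1, g1, h1⟩ := hp
    obtain ⟨d2, g2, h2⟩ := hq
    refine ⟨d1 + d2, X 0 ^ d2 * g1 + X 0 ^ d1 * g2, ?_⟩
    have key : X 0 ^ (d1 + d2) * (p + q) -
        rename Fin.castSucc (X 0 ^ d2 * g1 + X 0 ^ d1 * g2) =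
        X 0 ^ d2 * (X 0 ^ d1 * p - rename Fin.castSucc g1) +
          X 0 ^ d1 * (X 0 ^ d2 * q - rename Fin.castSucc g2) := by
      simp only [map_add, map_mul, map_pow, rename_X, Fin.castSucc_zero]
      ring
    rw [key]
    exact dvd_add (h1.mul_left _) (h2.mul_left _)
  | mul_X p i hp =>
    obtain ⟨d, g, h⟩ := hp
    fin_cases i
    · refine ⟨d, X 0 * g, ?_⟩
      show (X 0 * X 2 - X 1 ^ n : MvPolynomial (Fin 3) k) ∣
        X 0 ^ d * (p * X 0) - rename Fin.castSucc (X 0 * g)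
      have key : X 0 ^ d * (p * X 0) - rename Fin.castSucc (X 0 * g) =
          (X 0 ^ d * p - rename Fin.castSucc g) * X 0 := by
        simp only [map_mul, rename_X, Fin.castSucc_zero]
        ring
      rw [key]
      exact h.mul_right _
    · refine ⟨d, X 1 * g, ?_⟩
      show (X 0 * X 2 - X 1 ^ n : MvPolynomial (Fin 3) k) ∣
        X 0 ^ d * (p * X 1) - rename Fin.castSucc (X 1 * g)
      have key : X 0 ^ d * (p * X 1) - rename Fin.castSucc (X 1 * g) =
          (X 0 ^ d * p - rename Fin.castSucc g) * X 1 := by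
        simp only [map_mul, rename_X, Fin.castSucc_one]
        ring
      rw [key]
      exact h.mul_right _
    · refine ⟨d + 1, X 1 ^ n * g, ?_⟩
      show (X 0 * X 2 - X 1 ^ n : MvPolynomial (Fin 3) k) ∣
        X 0 ^ (d + 1) * (p * X 2) - rename Fin.castSucc (X 1 ^ n * g)
      have key : X 0 ^ (d + 1) * (p * X 2) - rename Fin.castSucc (X 1 ^ n * g) =
          (X 0 * X 2) * (X 0 ^ d * p - rename Fin.castSucc g) +
            rename Fin.castSucc g * (X 0 * X 2 - X 1 ^ n) := by
        simp only [map_mul, map_pow, rename_X, Fin.castSucc_one]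
        ring
      rw [key]
      exact dvd_add (h.mul_left _) (dvd_mul_left _ _)

private lemma an_cancel {k : Type*} [Field k] (n : ℕ) (p : MvPolynomial (Fin 3) k)
    (h : (X 0 * X 2 - X 1 ^ n : MvPolynomial (Fin 3) k) ∣ X 0 * p) :
    (X 0 * X 2 - X 1 ^ n : MvPolynomial (Fin 3) k) ∣ p := by
  obtain ⟨q, hq⟩ := h
  set e := MvPolynomial.finSuccEquiv k 2 with he
  have hq' := congrArg e hq
  have e0 : e (X 0) = Polynomial.X := finSuccEquiv_X_zero
  have e1 : e (X 1) = Polynomial.C (X 0) := by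
    have : (1 : Fin 3) = (0 : Fin 2).succ := rfl
    rw [this]; exact finSuccEquiv_X_succ
  have e2 : e (X 2) = Polynomial.C (X 1) := by
    have : (2 : Fin 3) = (1 : Fin 2).succ := rfl
    rw [this]; exact finSuccEquiv_X_succ
  rw [map_mul, map_mul, map_sub, map_mul, map_pow, e0, e1, e2] at hq'
  -- take coeff 0
  have hc := congrArg (fun r => Polynomial.coeff r 0) hq'
  simp only [Polynomial.mul_coeff_zero, Polynomial.coeff_X_zero, Polynomial.coeff_sub,
    Polynomial.coeff_C_zero, zero_mul, Polynomial.coeff_mul_C, ← Polynomial.C_pow] at hc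
  have hc0 : (e q).coeff 0 = 0 := by
    have hx : (X 0 : MvPolynomial (Fin 2) k) ^ n ≠ 0 := pow_ne_zero _ (X_ne_zero 0)
    rw [zero_sub, neg_mul] at hc
    have h2 : (X 0 : MvPolynomial (Fin 2) k) ^ n * (e q).coeff 0 = 0 :=
      neg_eq_zero.mp hc.symm
    exact (mul_eq_zero.mp h2).resolve_left hx
  obtain ⟨w, hw⟩ := Polynomial.X_dvd_iff.mpr hc0
  have hqw : q = X 0 * e.symm w := by
    apply e.injective
    rw [hw, map_mul, e0]
    simp
  refine ⟨e.symm w, ?_⟩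
  have : X 0 * p = X 0 * ((X 0 * X 2 - X 1 ^ n) * e.symm w) := by
    rw [hq, hqw]; ring
  exact mul_left_cancel₀ (X_ne_zero 0) this

private lemma an_cancel_pow {k : Type*} [Field k] (n d : ℕ) (p : MvPolynomial (Fin 3) k)
    (h : (X 0 * X 2 - X 1 ^ n : MvPolynomial (Fin 3) k) ∣ X 0 ^ d * p) :
    (X 0 * X 2 - X 1 ^ n : MvPolynomial (Fin 3) k) ∣ p := by
  induction d with
  | zero => simpa using h
  | succ d ih =>
    refine ih (an_cancel n _ ?_)
    have : X 0 ^ (d + 1) * p = X 0 * (X 0 ^ d * p) := by ring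
    rwa [this] at h

/-- The chart of the weighted blowing up of the plane along `(x, y^n)`: the map
`k[x,y,z] → k[x,y][1/x]`, `x ↦ x`, `y ↦ y`, `z ↦ y^n/x`, has kernel `(xz - y^n)`. -/
theorem kernel_of_An_chart_map
    {k : Type*} [Field k] (n : ℕ) (hn : 1 ≤ n) :
    RingHom.ker (MvPolynomial.aeval
        (![algebraMap (MvPolynomial (Fin 2) k) _ (X 0),
           algebraMap (MvPolynomial (Fin 2) k) _ (X 1),
           algebraMap (MvPolynomial (Fin 2) k) _ (X 1 ^ n) *
             IsLocalization.Away.invSelf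
               (S := Localization.Away (X 0 : MvPolynomial (Fin 2) k))
               (X 0 : MvPolynomial (Fin 2) k)] :
         Fin 3 → Localization.Away (X 0 : MvPolynomial (Fin 2) k)) :
      MvPolynomial (Fin 3) k →ₐ[k] Localization.Away (X 0 : MvPolynomial (Fin 2) k)) =
    Ideal.span {(X 0 * X 2 - X 1 ^ n : MvPolynomial (Fin 3) k)} := by
  set A := MvPolynomial (Fin 2) k
  set L := Localization.Away (X 0 : A)
  set v : Fin 3 → L := ![algebraMap A L (X 0), algebraMap A L (X 1),
    algebraMap A L (X 1 ^ n) * IsLocalization.Away.invSelf (S := L) (X 0 : A)] with hv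
  set φ : MvPolynomial (Fin 3) k →ₐ[k] L := MvPolynomial.aeval v with hφ
  have hv0 : v 0 = algebraMap A L (X 0) := rfl
  have hv1 : v 1 = algebraMap A L (X 1) := rfl
  have hv2 : v 2 = algebraMap A L (X 1 ^ n) * IsLocalization.Away.invSelf (S := L) (X 0 : A) :=
    rfl
  have hinv : algebraMap A L (X 0) * IsLocalization.Away.invSelf (S := L) (X 0 : A) = 1 :=
    IsLocalization.Away.mul_invSelf _
  have hφf : φ (X 0 * X 2 - X 1 ^ n) = 0 := by
    simp only [hφ, map_sub, map_mul, map_pow, aeval_X, hv0, hv1, hv2]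
    calc algebraMap A L (X 0) * ((algebraMap A L (X 1)) ^ n *
          IsLocalization.Away.invSelf (S := L) (X 0 : A)) - (algebraMap A L (X 1)) ^ n
        = (algebraMap A L (X 1)) ^ n *
            (algebraMap A L (X 0) * IsLocalization.Away.invSelf (S := L) (X 0 : A)) -
            (algebraMap A L (X 1)) ^ n := by ring
      _ = 0 := by rw [hinv]; ring
  have hφι : ∀ g : A, φ (rename Fin.castSucc g) = algebraMap A L g := by
    intro g
    have : (φ.comp (rename (R := k) Fin.castSucc)) =
        (IsScalarTower.toAlgHom k A L) := by
      apply MvPolynomial.algHom_ext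
      intro i
      fin_cases i
      · rw [AlgHom.comp_apply, rename_X, hφ, aeval_X]; exact hv0
      · rw [AlgHom.comp_apply, rename_X, hφ, aeval_X]; exact hv1
    exact congrArg (fun ψ => ψ g) this
  apply le_antisymm
  · intro p hp
    rw [RingHom.mem_ker] at hp
    obtain ⟨d, g, q, hq⟩ := an_reduce n p
    -- apply φ
    have hg0 : algebraMap A L g = 0 := by
      have := congrArg φ hq
      simp only [map_sub, map_mul, map_pow, hφf, zero_mul, hp, mul_zero, zero_sub,
        hφι, neg_eq_zero] at this
      exact this
    have hg : g = 0 := by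
      have hinj : Function.Injective (algebraMap A L) :=
        IsLocalization.injective L
          (powers_le_nonZeroDivisors_of_noZeroDivisors (X_ne_zero 0))
      exact hinj (by rw [hg0, map_zero])
    rw [hg, map_zero, sub_zero] at hq
    rw [Ideal.mem_span_singleton]
    exact an_cancel_pow n d p ⟨q, hq⟩
  · rw [Ideal.span_le, Set.singleton_subset_iff]
    exact hφf
end
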